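/- arXiv:2411.04447 — 3 statements merged into one kernel-verified Lean document; each statement's English description precedes it below -/
import Mathlib

section
/- Let m be an integer and let s be an integer with 0 ≤ s ≤ m−2 such that m+s is even and m+s ≥ 6, and let f : F_q → F_2 (q = 2^m) be an s-plateaued Boolean function with f(0) = 0. Then the extended binary code C̄_f' is an LCD code (C̄_f' ∩ (C̄_f')^⊥ = {0}) of length 2^m + m + 2 and dimension m + 2. Moreover, if f is balanced (W_f(0) = 0), then the minimum distance of C̄_f' is at least 2^{m−1} − 2^{(m+s−2)/2} + 2. -/
open Finset

noncomputable section

/-- ζ_p = exp(2πi/p). -/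
def zetaP (p : ℕ) : ℂ := Complex.exp (2 * Real.pi * Complex.I / p)

/-- ζ_p^a for a ∈ F_p. -/
def eChar (p : ℕ) (a : ZMod p) : ℂ := zetaP p ^ a.val

/-- Walsh transform of f : F_q → F_p : W_f(β) = Σ_x ζ_p^{f(x) − Tr(βx)}. -/
def walsh (p : ℕ) (F : Type) [Field F] [Fintype F] [Algebra (ZMod p) F]
    (f : F → ZMod p) (β : F) : ℂ :=
  ∑ x : F, eChar p (f x - Algebra.trace (ZMod p) F (β * x))

/-- √p* = √p if p ≡ 1 (mod 4), and i√p if p ≡ 3 (mod 4). -/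
def sqrtPStar (p : ℕ) : ℂ :=
  if p % 4 = 1 then ((Real.sqrt p : ℝ) : ℂ) else Complex.I * ((Real.sqrt p : ℝ) : ℂ)

/-- f is s-plateaued: |W_f(β)|² ∈ {0, p^{m+s}} for all β. -/
def IsPlateaued (p m s : ℕ) (F : Type) [Field F] [Fintype F] [Algebra (ZMod p) F]
    (f : F → ZMod p) : Prop :=
  ∀ β : F, Complex.normSq (walsh p F f β) = 0 ∨
    Complex.normSq (walsh p F f β) = (p : ℝ) ^ (m + s)

/-- Walsh support S_f = {β : |W_f(β)|² = p^{m+s}}. -/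
def walshSupp (p m s : ℕ) (F : Type) [Field F] [Fintype F] [Algebra (ZMod p) F]
    (f : F → ZMod p) : Set F :=
  {β : F | Complex.normSq (walsh p F f β) = (p : ℝ) ^ (m + s)}

/-- f is weakly regular s-plateaued with sign ε and dual function f^*. -/
def IsWeaklyRegularPlateaued (p m s : ℕ) (F : Type) [Field F] [Fintype F]
    [Algebra (ZMod p) F] (f : F → ZMod p) (ε : ℤ) (fstar : F → ZMod p) : Prop :=
  IsPlateaued p m s F f ∧ (ε = 1 ∨ ε = -1) ∧
  (∀ β : F, β ∉ walshSupp p m s F f → fstar β = 0) ∧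
  (∀ β ∈ walshSupp p m s F f,
    walsh p F f β = (ε : ℂ) * sqrtPStar p ^ (m + s) * eChar p (fstar β))

/-- Walsh transform of a Boolean function, with values in ℤ. -/
def walsh2 (F : Type) [Field F] [Fintype F] [Algebra (ZMod 2) F]
    (f : F → ZMod 2) (β : F) : ℤ :=
  ∑ x : F, (-1 : ℤ) ^ ((f x + Algebra.trace (ZMod 2) F (β * x)).val)

/-- A Boolean function is s-plateaued: W_f(β)² ∈ {0, 2^{m+s}} for all β. -/
def IsPlateaued2 (m s : ℕ) (F : Type) [Field F] [Fintype F] [Algebra (ZMod 2) F]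
    (f : F → ZMod 2) : Prop :=
  ∀ β : F, walsh2 F f β ^ 2 = 0 ∨ walsh2 F f β ^ 2 = 2 ^ (m + s)

/-- Hamming weight. -/
def wtH {n : Type} [Fintype n] {K : Type} [Zero K] [DecidableEq K] (v : n → K) : ℕ :=
  (Finset.univ.filter (fun i => v i ≠ 0)).card

/-- A code S has minimum distance d. -/
def hasMinDist {n : Type} [Fintype n] {K : Type} [Zero K] [DecidableEq K]
    (S : Set (n → K)) (d : ℕ) : Prop :=
  (∃ v ∈ S, v ≠ 0 ∧ wtH v = d) ∧ ∀ v ∈ S, v ≠ 0 → d ≤ wtH v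

/-- The dual code of a set of vectors. -/
def dualCode {n : Type} [Fintype n] {K : Type} [Field K] (S : Set (n → K)) :
    Submodule K (n → K) where
  carrier := {u : n → K | ∀ v ∈ S, ∑ i, u i * v i = 0}
  add_mem' := by
    intro u w hu hw v hv
    have h1 := hu v hv
    have h2 := hw v hv
    simp only [Pi.add_apply, add_mul, Finset.sum_add_distrib, h1, h2, add_zero]
  zero_mem' := by
    intro v hv
    simp
  smul_mem' := by
    intro c u hu v hv
    have h1 := hu v hv
    simp only [Pi.smul_apply, smul_eq_mul, mul_assoc, ← Finset.mul_sum, h1, mul_zero]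

/-- The code C̄_f = {(a f(x) + Tr(bx) + c)_{x ∈ F_q}}. -/
def codeCbar (p : ℕ) (F : Type) [Field F] [Fintype F] [Algebra (ZMod p) F]
    (f : F → ZMod p) : Set (F → ZMod p) :=
  {v : F → ZMod p | ∃ a c : ZMod p, ∃ b : F,
    v = fun x => a * f x + Algebra.trace (ZMod p) F (b * x) + c}

/-- The extended code C̄_f' ⊆ F_p^{m+2+q}: all vectors
(c, a, a_0, …, a_{m−1}, (a f(x) + Tr(bx) + a + c)_{x ∈ F_q}) with b = Σ a_i α^i. -/
def extCode (p m : ℕ) (F : Type) [Field F] [Fintype F] [Algebra (ZMod p) F]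
    (f : F → ZMod p) (α : F) : Set (Fin (m + 2) ⊕ F → ZMod p) :=
  {v | ∃ c a : ZMod p, ∃ aa : Fin m → ZMod p,
    v = Sum.elim (Fin.cons c (Fin.cons a aa))
      (fun x => a * f x +
        Algebra.trace (ZMod p) F ((∑ i : Fin m, aa i • α ^ (i : ℕ)) * x) + a + c)}

/-- The punctured code C_f^* indexed by the nonzero elements of F_q. -/
def codeCstar (p : ℕ) (F : Type) [Field F] [Fintype F] [Algebra (ZMod p) F]
    (f : F → ZMod p) : Set ({x : F // x ≠ 0} → ZMod p) :=
  {v | ∃ a : ZMod p, ∃ b : F,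
    v = fun x => a * f x.val + Algebra.trace (ZMod p) F (b * x.val)}

end


-- ===== auxiliary lemmas =====

lemma aux_zmod2_cases (u : ZMod 2) : u = 0 ∨ u = 1 := by revert u; decide

lemma aux_ne0_iff (u : ZMod 2) : u ≠ 0 ↔ u = 1 := by revert u; decide

lemma aux_sum_pm (F : Type) [Fintype F] (h : F → ZMod 2) :
    ∑ x, (-1:ℤ)^((h x).val)
      = (Fintype.card F : ℤ) - 2 * ((univ.filter fun x => h x = 1).card : ℤ) := by
  have key : ∀ u : ZMod 2, (-1:ℤ)^u.val = 1 - 2 * (if u = 1 then 1 else 0) := by decide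
  simp_rw [key, Finset.sum_sub_distrib, Finset.sum_const, card_univ, ← Finset.mul_sum]
  rw [Finset.sum_boole]
  simp

lemma aux_flip (u : ZMod 2) : (-1:ℤ)^((u+1).val) = -(-1:ℤ)^u.val := by revert u; decide

lemma aux_shift (d u : ZMod 2) : (-1:ℤ)^((u + d).val) = (-1)^d.val * (-1)^u.val := by
  revert d u; decide

lemma aux_trace_char (F : Type) [Field F] [Fintype F] [Algebra (ZMod 2) F] (b : F)
    (hb : b ≠ 0) :
    ∑ x, (-1:ℤ)^((Algebra.trace (ZMod 2) F (b * x)).val) = 0 := by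
  have hfin : Module.Finite (ZMod 2) F := Module.Finite.of_finite
  have htr : Algebra.trace (ZMod 2) F ≠ 0 := Algebra.trace_ne_zero (ZMod 2) F
  obtain ⟨y, hy⟩ : ∃ y, Algebra.trace (ZMod 2) F y ≠ 0 := by
    by_contra hc
    push_neg at hc
    exact htr (LinearMap.ext hc)
  have hy1 : Algebra.trace (ZMod 2) F y = 1 := by
    rcases aux_zmod2_cases (Algebra.trace (ZMod 2) F y) with h | h
    · exact absurd h hy
    · exact h
  set x₀ := b⁻¹ * y with hx₀
  have hbx₀ : Algebra.trace (ZMod 2) F (b * x₀) = 1 := by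
    rw [hx₀, ← mul_assoc, mul_inv_cancel₀ hb, one_mul, hy1]
  have heq := Fintype.sum_equiv (Equiv.addRight x₀)
    (fun x => (-1:ℤ)^((Algebra.trace (ZMod 2) F (b * (x + x₀))).val))
    (fun x => (-1:ℤ)^((Algebra.trace (ZMod 2) F (b * x)).val)) (fun x => rfl)
  have h2 : ∀ x : F, (-1:ℤ)^((Algebra.trace (ZMod 2) F (b * (x + x₀))).val)
      = -(-1:ℤ)^((Algebra.trace (ZMod 2) F (b * x)).val) := by
    intro x
    rw [mul_add, map_add, hbx₀, aux_flip]
  rw [Finset.sum_congr rfl (fun x _ => h2 x)] at heq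
  rw [Finset.sum_neg_distrib] at heq
  linarith

lemma aux_T_dvd (m : ℕ) (F : Type) [Field F] [Fintype F] [Algebra (ZMod 2) F]
    (f : F → ZMod 2) (hcard : Fintype.card F = 2 ^ m) (hm : 3 ≤ m)
    (hW : ∀ b, (8:ℤ) ∣ walsh2 F f b) (a c : ZMod 2) (b : F) :
    (8:ℤ) ∣ ∑ x, (-1:ℤ)^((a * f x + Algebra.trace (ZMod 2) F (b*x) + c).val) := by
  have hc : ∀ u : ZMod 2, (-1:ℤ)^((u + c).val) = (-1)^c.val * (-1)^u.val := by
    revert c; decide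
  simp_rw [hc, ← Finset.mul_sum]
  apply Dvd.dvd.mul_left
  rcases aux_zmod2_cases a with rfl | rfl
  · simp_rw [zero_mul, zero_add]
    by_cases hb : b = 0
    · subst hb
      simp_rw [zero_mul, map_zero]
      have hone : ∑ _x : F, ((-1:ℤ)^((0:ZMod 2)).val) = (Fintype.card F : ℤ) := by
        simp
      rw [hone, hcard]
      exact ⟨2^(m-3), by rw [show (8:ℤ) = 2^3 by norm_num, ← pow_add]; push_cast; congr 1; omega⟩
    · rw [aux_trace_char F b hb]
      exact dvd_zero _
  · simp_rw [one_mul]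
    exact hW b

lemma aux_pair_orth (m : ℕ) (F : Type) [Field F] [Fintype F] [Algebra (ZMod 2) F]
    (f : F → ZMod 2) (hcard : Fintype.card F = 2 ^ m) (hm : 3 ≤ m)
    (hW : ∀ b, (8:ℤ) ∣ walsh2 F f b) (a c a' c' : ZMod 2) (b b' : F) :
    ∑ x : F, (a * f x + Algebra.trace (ZMod 2) F (b*x) + c)
      * (a' * f x + Algebra.trace (ZMod 2) F (b'*x) + c') = (0 : ZMod 2) := by
  set g : F → ZMod 2 := fun x => a * f x + Algebra.trace (ZMod 2) F (b*x) + c with hg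
  set h : F → ZMod 2 := fun x => a' * f x + Algebra.trace (ZMod 2) F (b'*x) + c' with hh
  have key : ∀ u v : ZMod 2,
      (4:ℤ) * ((u*v).val : ℤ) = 1 - (-1)^u.val - (-1)^v.val + (-1)^((u+v).val) := by decide
  set S : ℤ := ∑ x : F, ((g x * h x).val : ℤ) with hS
  have hsum : (4:ℤ) * S = (Fintype.card F : ℤ)
      - (∑ x, (-1:ℤ)^((g x).val)) - (∑ x, (-1:ℤ)^((h x).val))
      + (∑ x, (-1:ℤ)^((g x + h x).val)) := by
    rw [hS, Finset.mul_sum]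
    rw [Finset.sum_congr rfl (fun x _ => key (g x) (h x))]
    rw [Finset.sum_add_distrib, Finset.sum_sub_distrib, Finset.sum_sub_distrib]
    simp [card_univ]
  have hgh : ∀ x : F, g x + h x
      = (a+a') * f x + Algebra.trace (ZMod 2) F ((b+b')*x) + (c+c') := by
    intro x
    simp only [hg, hh, add_mul, map_add]
    ring
  have h8 : (8:ℤ) ∣ 4 * S := by
    rw [hsum, Finset.sum_congr rfl (fun x _ => congrArg _ (congrArg ZMod.val (hgh x)))]
    have d1 := aux_T_dvd m F f hcard hm hW a c b
    have d2 := aux_T_dvd m F f hcard hm hW a' c' b'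
    have d3 := aux_T_dvd m F f hcard hm hW (a+a') (c+c') (b+b')
    have dq : (8:ℤ) ∣ (Fintype.card F : ℤ) := by
      rw [hcard]
      exact ⟨2^(m-3), by rw [show (8:ℤ) = 2^3 by norm_num, ← pow_add]; push_cast; congr 1; omega⟩
    exact dvd_add (dvd_sub (dvd_sub dq d1) d2) d3
  have h2 : (2:ℤ) ∣ S := by
    obtain ⟨k, hk⟩ := h8
    exact ⟨k, by linarith⟩
  have hcast : ((S : ℤ) : ZMod 2) = ∑ x : F, g x * h x := by
    rw [hS]
    push_cast
    exact Finset.sum_congr rfl (fun x _ => by rw [ZMod.natCast_val, ZMod.cast_id])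
  have hz : ((S : ℤ) : ZMod 2) = 0 := (ZMod.intCast_zmod_eq_zero_iff_dvd S 2).mpr h2
  rw [← hcast, hz]

lemma aux_pair_orth' (m : ℕ) (F : Type) [Field F] [Fintype F] [Algebra (ZMod 2) F]
    (f : F → ZMod 2) (hcard : Fintype.card F = 2 ^ m) (hm : 3 ≤ m)
    (hW : ∀ b, (8:ℤ) ∣ walsh2 F f b) (a c a' c' : ZMod 2) (b b' : F) :
    ∑ x : F, (a * f x + Algebra.trace (ZMod 2) F (b*x) + a + c)
      * (a' * f x + Algebra.trace (ZMod 2) F (b'*x) + a' + c') = (0 : ZMod 2) := by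
  rw [← aux_pair_orth m F f hcard hm hW a (a+c) a' (a'+c') b b']
  exact Finset.sum_congr rfl (fun x _ => by ring)

lemma aux_li (m : ℕ) (F : Type) [Field F] [Fintype F] [Algebra (ZMod 2) F]
    (hcard : Fintype.card F = 2 ^ m)
    (α : F) (hα : ∀ x : F, x ≠ 0 → ∃ k : ℕ, x = α ^ k) :
    ∀ aa : Fin m → ZMod 2, (∑ i : Fin m, aa i • α ^ (i : ℕ)) = 0 → ∀ i, aa i = 0 := by
  have hfin : Module.Finite (ZMod 2) F := Module.Finite.of_finite
  have hfr : Module.finrank (ZMod 2) F = m := by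
    have hc := Module.card_eq_pow_finrank (K := ZMod 2) (V := F)
    rw [ZMod.card, hcard] at hc
    exact Nat.pow_right_injective le_rfl hc.symm
  have htop : IntermediateField.adjoin (ZMod 2) {α} = ⊤ := by
    rw [eq_top_iff]
    intro x _
    by_cases hx : x = 0
    · exact hx ▸ zero_mem _
    · obtain ⟨k, rfl⟩ := hα x hx
      exact pow_mem (IntermediateField.mem_adjoin_simple_self (ZMod 2) α) k
  have hdeg : (minpoly (ZMod 2) α).natDegree = m := by
    rw [← IntermediateField.adjoin.finrank (Algebra.IsIntegral.isIntegral α), htop, ← hfr]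
    exact IntermediateField.finrank_top'
  have hli := linearIndependent_pow (K := ZMod 2) α
  rw [hdeg] at hli
  intro aa h i
  exact Fintype.linearIndependent_iff.mp hli aa h i

lemma aux_wt_split {n₁ n₂ : Type} [Fintype n₁] [Fintype n₂]
    (g₁ : n₁ → ZMod 2) (g₂ : n₂ → ZMod 2) :
    wtH (Sum.elim g₁ g₂) = wtH g₁ + wtH g₂ := by
  unfold wtH
  rw [Finset.card_filter, Finset.card_filter, Finset.card_filter, Fintype.sum_sum_type]
  simp
  congr 1 <;> refine Finset.sum_congr rfl (fun x _ => ?_) <;> split_ifs <;> simp_all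

lemma aux_wt_one {n : Type} [Fintype n] (u : n → ZMod 2) (i : n) (h : u i ≠ 0) :
    1 ≤ wtH u :=
  Finset.card_pos.mpr ⟨i, Finset.mem_filter.mpr ⟨Finset.mem_univ _, h⟩⟩

lemma aux_wt_two {n : Type} [Fintype n] [DecidableEq n] (u : n → ZMod 2) (i j : n)
    (hij : i ≠ j) (hi : u i ≠ 0) (hj : u j ≠ 0) : 2 ≤ wtH u := by
  have hsub : ({i, j} : Finset n) ⊆ univ.filter (fun k => u k ≠ 0) := by
    intro k hk
    rcases Finset.mem_insert.mp hk with rfl | hk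
    · exact Finset.mem_filter.mpr ⟨Finset.mem_univ _, hi⟩
    · rw [Finset.mem_singleton] at hk
      subst hk
      exact Finset.mem_filter.mpr ⟨Finset.mem_univ _, hj⟩
  calc 2 = ({i, j} : Finset n).card := (Finset.card_pair hij).symm
  _ ≤ _ := Finset.card_le_card hsub

theorem statement14 (m s : ℕ) (hs : s ≤ m - 2) (hpar : Even (m + s)) (hms : 6 ≤ m + s)
    (F : Type) [Field F] [Fintype F] [Algebra (ZMod 2) F]
    (hcard : Fintype.card F = 2 ^ m)
    (α : F) (hα : ∀ x : F, x ≠ 0 → ∃ k : ℕ, x = α ^ k)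
    (f : F → ZMod 2) (hf0 : f 0 = 0) (hpl : IsPlateaued2 m s F f) :
    extCode 2 m F f α ∩ (dualCode (extCode 2 m F f α) : Set (Fin (m + 2) ⊕ F → ZMod 2))
      = {0} ∧
    Fintype.card (Fin (m + 2) ⊕ F) = 2 ^ m + m + 2 ∧
    Set.ncard (extCode 2 m F f α) = 2 ^ (m + 2) ∧
    (walsh2 F f 0 = 0 → ∀ v ∈ extCode 2 m F f α, v ≠ 0 →
      2 ^ (m - 1) - 2 ^ ((m + s - 2) / 2) + 2 ≤ wtH v) := by
  classical
  have hm4 : 4 ≤ m := by omega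
  have hm3 : 3 ≤ m := by omega
  obtain ⟨t, ht⟩ := hpar
  have ht3 : 3 ≤ t := by omega
  have htm : t + 1 ≤ m := by omega
  have hWval : ∀ b : F, walsh2 F f b = 0 ∨ walsh2 F f b = 2^t ∨ walsh2 F f b = -2^t := by
    intro b
    rcases hpl b with h | h
    · left; exact sq_eq_zero_iff.mp h
    · have h2 : (2:ℤ)^(m+s) = 2^t * 2^t := by rw [ht, pow_add]
      rw [h2] at h
      have hfac : (walsh2 F f b - 2^t) * (walsh2 F f b + 2^t) = 0 := by nlinarith [h]
      rcases mul_eq_zero.mp hfac with h1 | h1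
      · right; left; linarith
      · right; right; linarith
  have hW8 : ∀ b : F, (8:ℤ) ∣ walsh2 F f b := by
    intro b
    have h8t : (8:ℤ) ∣ 2^t :=
      ⟨2^(t-3), by rw [show (8:ℤ) = 2^3 by norm_num, ← pow_add]; congr 1; omega⟩
    rcases hWval b with h | h | h <;> rw [h]
    · exact dvd_zero _
    · exact h8t
    · exact dvd_neg.mpr h8t
  have hzero : (Sum.elim (Fin.cons (0:ZMod 2) (Fin.cons 0 (0 : Fin m → ZMod 2)))
      (fun x : F => 0 * f x + Algebra.trace (ZMod 2) F
        ((∑ i : Fin m, (0 : Fin m → ZMod 2) i • α ^ (i : ℕ)) * x) + 0 + 0)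
      : Fin (m+2) ⊕ F → ZMod 2) = 0 := by
    funext i
    rcases i with i | x
    · simp only [Sum.elim_inl, Pi.zero_apply]
      refine Fin.cases rfl (fun j => ?_) i
      rw [Fin.cons_succ]
      refine Fin.cases rfl (fun k => ?_) j
      rw [Fin.cons_succ]
      rfl
    · simp
  have h0mem : (0 : Fin (m+2) ⊕ F → ZMod 2) ∈ extCode 2 m F f α := ⟨0, 0, 0, hzero.symm⟩
  have h1fin : (1 : Fin (m+2)) = Fin.succ 0 := by ext; simp
  refine ⟨?_, ?_, ?_, ?_⟩
  · -- LCD property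
    rw [Set.eq_singleton_iff_unique_mem]
    refine ⟨⟨h0mem, SetLike.mem_coe.mpr (Submodule.zero_mem _)⟩, ?_⟩
    rintro v ⟨hvC, hvD⟩
    obtain ⟨c, a, aa, hv⟩ := hvC
    have hdual : ∀ w ∈ extCode 2 m F f α, ∑ i, v i * w i = 0 := hvD
    have hc : c = 0 := by
      have e1 := hdual _ (⟨1, 0, 0, rfl⟩ : (Sum.elim
        (Fin.cons (1:ZMod 2) (Fin.cons 0 (0 : Fin m → ZMod 2)))
        (fun x : F => 0 * f x + Algebra.trace (ZMod 2) F
          ((∑ i : Fin m, (0 : Fin m → ZMod 2) i • α ^ (i : ℕ)) * x) + 0 + 1)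
        : Fin (m+2) ⊕ F → ZMod 2) ∈ extCode 2 m F f α)
      rw [hv, Fintype.sum_sum_type] at e1
      simp only [Sum.elim_inl, Sum.elim_inr] at e1
      rw [aux_pair_orth' m F f hcard hm3 hW8 a c 0 1 _ _, add_zero] at e1
      simpa [Fin.sum_univ_succ] using e1
    have ha : a = 0 := by
      have e1 := hdual _ (⟨0, 1, 0, rfl⟩ : (Sum.elim
        (Fin.cons (0:ZMod 2) (Fin.cons 1 (0 : Fin m → ZMod 2)))
        (fun x : F => 1 * f x + Algebra.trace (ZMod 2) F
          ((∑ i : Fin m, (0 : Fin m → ZMod 2) i • α ^ (i : ℕ)) * x) + 1 + 0)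
        : Fin (m+2) ⊕ F → ZMod 2) ∈ extCode 2 m F f α)
      rw [hv, Fintype.sum_sum_type] at e1
      simp only [Sum.elim_inl, Sum.elim_inr] at e1
      rw [aux_pair_orth' m F f hcard hm3 hW8 a c 1 0 _ _, add_zero] at e1
      simpa [Fin.sum_univ_succ] using e1
    have haa : aa = 0 := by
      funext j
      have e1 := hdual _ (⟨0, 0, (fun i => if i = j then 1 else 0), rfl⟩ : (Sum.elim
        (Fin.cons (0:ZMod 2) (Fin.cons 0 (fun i : Fin m => if i = j then (1:ZMod 2) else 0)))
        (fun x : F => 0 * f x + Algebra.trace (ZMod 2) F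
          ((∑ i : Fin m, (fun i : Fin m => if i = j then (1:ZMod 2) else 0) i • α ^ (i : ℕ)) * x)
          + 0 + 0)
        : Fin (m+2) ⊕ F → ZMod 2) ∈ extCode 2 m F f α)
      rw [hv, Fintype.sum_sum_type] at e1
      simp only [Sum.elim_inl, Sum.elim_inr] at e1
      rw [aux_pair_orth' m F f hcard hm3 hW8 a c 0 0 _ _, add_zero] at e1
      simpa [Fin.sum_univ_succ, mul_ite] using e1
    subst hc; subst ha; subst haa
    rw [hv]
    exact hzero
  · -- length
    rw [Fintype.card_sum, Fintype.card_fin, hcard]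
    ring
  · -- dimension / size
    set ψ : ZMod 2 × ZMod 2 × (Fin m → ZMod 2) → (Fin (m+2) ⊕ F → ZMod 2) := fun p =>
      Sum.elim (Fin.cons p.1 (Fin.cons p.2.1 p.2.2))
        (fun x : F => p.2.1 * f x + Algebra.trace (ZMod 2) F
          ((∑ i : Fin m, p.2.2 i • α ^ (i : ℕ)) * x) + p.2.1 + p.1) with hψdef
    have himg : extCode 2 m F f α = ψ '' Set.univ := by
      rw [Set.image_univ]
      ext v
      constructor
      · rintro ⟨c, a, aa, hv⟩
        exact ⟨(c, a, aa), hv.symm⟩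
      · rintro ⟨⟨c, a, aa⟩, hv⟩
        exact ⟨c, a, aa, hv.symm⟩
    have hinj : Function.Injective ψ := by
      rintro ⟨c, a, aa⟩ ⟨c', a', aa'⟩ h
      simp only [hψdef] at h
      have h0 := congrFun h (Sum.inl 0)
      have h1 := congrFun h (Sum.inl 1)
      have h2 : ∀ j : Fin m, aa j = aa' j := by
        intro j
        have h3 := congrFun h (Sum.inl j.succ.succ)
        simpa [Fin.cons_succ] using h3
      simp only [Sum.elim_inl, Fin.cons_zero] at h0
      rw [h1fin] at h1
      simp only [Sum.elim_inl, Fin.cons_succ, Fin.cons_zero] at h1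
      simp only [Prod.mk.injEq]
      exact ⟨h0, h1, funext h2⟩
    rw [himg, Set.ncard_image_of_injective _ hinj, Set.ncard_univ]
    simp only [Nat.card_eq_fintype_card, Fintype.card_prod, Fintype.card_fun, ZMod.card,
      Fintype.card_fin]
    rw [pow_add]
    ring
  · -- minimum distance
    intro hbal v hvC hvne
    obtain ⟨c, a, aa, hv⟩ := hvC
    subst hv
    have hexp : (m + s - 2)/2 = t - 1 := by omega
    rw [hexp, aux_wt_split]
    set A := (2:ℕ)^(m-1) with hA
    set B := (2:ℕ)^(t-1) with hB
    set b := ∑ i : Fin m, aa i • α ^ (i : ℕ) with hbdef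
    have hBpos : 1 ≤ B := Nat.one_le_two_pow
    have hApos : 2 ≤ A := by
      rw [hA]
      exact Nat.one_lt_two_pow_iff.mpr (by omega)
    have hq2 : (2:ℕ)^m = 2 * A := by rw [hA, ← pow_succ']; congr 1; omega
    have ht2 : (2:ℕ)^t = 2 * B := by rw [hB, ← pow_succ']; congr 1; omega
    have hq2' : (2:ℤ)^m = 2 * (A:ℤ) := by exact_mod_cast hq2
    have ht2' : (2:ℤ)^t = 2 * (B:ℤ) := by exact_mod_cast ht2
    have h2t : (0:ℤ) ≤ 2^t := by positivity
    have hcount : ∀ g : F → ZMod 2,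
        2 * (wtH g : ℤ) = 2^m - ∑ x, (-1:ℤ)^((g x).val) := by
      intro g
      have h1 : wtH g = (univ.filter fun x => g x = 1).card := by
        unfold wtH
        exact congrArg Finset.card (Finset.filter_congr (fun x _ => aux_ne0_iff (g x)))
      have h2 := aux_sum_pm F g
      rw [hcard] at h2
      rw [h1]
      push_cast at h2 ⊢
      linarith
    rcases aux_zmod2_cases a with rfl | rfl
    · -- a = 0
      rw [show (fun x : F => (0:ZMod 2) * f x + Algebra.trace (ZMod 2) F (b*x) + 0 + c)
            = fun x => Algebra.trace (ZMod 2) F (b*x) + c from funext fun x => by ring]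
      by_cases hb : b = 0
      · rcases aux_zmod2_cases c with rfl | rfl
        · -- the zero codeword: contradiction
          exfalso
          apply hvne
          have haa : aa = 0 := funext (aux_li m F hcard α hα aa (hbdef.symm.trans hb))
          rw [haa, hb]
          funext i
          rcases i with i | x
          · simp only [Sum.elim_inl, Pi.zero_apply]
            refine Fin.cases rfl (fun j => ?_) i
            rw [Fin.cons_succ]
            refine Fin.cases rfl (fun k => ?_) j
            rw [Fin.cons_succ]
            rfl
          · simp
        · -- constant-one word
          rw [show (fun x : F => Algebra.trace (ZMod 2) F (b*x) + 1) = fun _ => (1:ZMod 2)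
                from funext fun x => by rw [hb, zero_mul, map_zero, zero_add]]
          have hNc := hcount (fun _ : F => (1:ZMod 2))
          have hsum1 : ∑ _x : F, (-1:ℤ)^(((1:ZMod 2)).val) = -(2^m) := by
            simp [hcard, show ZMod.val (1 : ZMod 2) = 1 from rfl]
          rw [hsum1] at hNc
          have hNA : wtH (fun _ : F => (1:ZMod 2)) = 2 * A := by
            have hz : (wtH (fun _ : F => (1:ZMod 2)) : ℤ) = 2 * (A:ℤ) := by linarith
            exact_mod_cast hz
          refine le_trans ?_ (Nat.add_le_add (Nat.zero_le _) hNA.ge)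
          omega
      · -- b ≠ 0 : balanced linear word
        obtain ⟨j, hj⟩ : ∃ j, aa j ≠ 0 := by
          by_contra hcon
          push_neg at hcon
          apply hb
          rw [hbdef]
          exact Finset.sum_eq_zero (fun i _ => by rw [hcon i, zero_smul])
        have hsum0 : ∑ x : F, (-1:ℤ)^((Algebra.trace (ZMod 2) F (b*x) + c).val) = 0 := by
          simp_rw [aux_shift c, ← Finset.mul_sum, aux_trace_char F b hb, mul_zero]
        have hNc := hcount (fun x => Algebra.trace (ZMod 2) F (b*x) + c)
        rw [hsum0, sub_zero] at hNc
        have hNA : wtH (fun x : F => Algebra.trace (ZMod 2) F (b*x) + c) = A := by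
          have hz : (wtH (fun x : F => Algebra.trace (ZMod 2) F (b*x) + c) : ℤ) = (A:ℤ) := by
            linarith
          exact_mod_cast hz
        rcases aux_zmod2_cases c with rfl | rfl
        · have hP : 1 ≤ wtH (Fin.cons (0:ZMod 2) (Fin.cons 0 aa) : Fin (m+2) → ZMod 2) :=
            aux_wt_one _ j.succ.succ (by rw [Fin.cons_succ, Fin.cons_succ]; exact hj)
          refine le_trans ?_ (Nat.add_le_add hP hNA.ge)
          omega
        · have hP : 1 ≤ wtH (Fin.cons (1:ZMod 2) (Fin.cons 0 aa) : Fin (m+2) → ZMod 2) :=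
            aux_wt_one _ 0 (by rw [Fin.cons_zero]; exact one_ne_zero)
          refine le_trans ?_ (Nat.add_le_add hP hNA.ge)
          omega
    · -- a = 1
      rcases aux_zmod2_cases c with rfl | rfl
      · -- c = 0
        rw [show (fun x : F => (1:ZMod 2) * f x + Algebra.trace (ZMod 2) F (b*x) + 1 + 0)
              = fun x => f x + Algebra.trace (ZMod 2) F (b*x) + 1
              from funext fun x => by ring]
        have hsum : ∑ x : F, (-1:ℤ)^((f x + Algebra.trace (ZMod 2) F (b*x) + 1).val)
            = - walsh2 F f b := by
          simp_rw [aux_flip]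
          rw [Finset.sum_neg_distrib]
          rfl
        have hNc := hcount (fun x => f x + Algebra.trace (ZMod 2) F (b*x) + 1)
        rw [hsum, sub_neg_eq_add] at hNc
        by_cases hb : b = 0
        · have hb0 : walsh2 F f b = 0 := by rw [hb]; exact hbal
          rw [hb0, add_zero] at hNc
          have hNA : wtH (fun x : F => f x + Algebra.trace (ZMod 2) F (b*x) + 1) = A := by
            have hz : (wtH (fun x : F => f x + Algebra.trace (ZMod 2) F (b*x) + 1) : ℤ)
                = (A:ℤ) := by linarith
            exact_mod_cast hz
          have hP : 1 ≤ wtH (Fin.cons (0:ZMod 2) (Fin.cons 1 aa) : Fin (m+2) → ZMod 2) :=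
            aux_wt_one _ 1 (by rw [h1fin, Fin.cons_succ, Fin.cons_zero]; exact one_ne_zero)
          refine le_trans ?_ (Nat.add_le_add hP hNA.ge)
          omega
        · obtain ⟨j, hj⟩ : ∃ j, aa j ≠ 0 := by
            by_contra hcon
            push_neg at hcon
            apply hb
            rw [hbdef]
            exact Finset.sum_eq_zero (fun i _ => by rw [hcon i, zero_smul])
          have hlow : -(2:ℤ)^t ≤ walsh2 F f b := by
            rcases hWval b with h | h | h <;> rw [h] <;> linarith [h2t]
          have hAB : A ≤ wtH (fun x : F => f x + Algebra.trace (ZMod 2) F (b*x) + 1) + B := by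
            have hz : (A:ℤ) ≤ (wtH (fun x : F => f x + Algebra.trace (ZMod 2) F (b*x) + 1) : ℤ)
                + (B:ℤ) := by linarith
            exact_mod_cast hz
          have hN : A - B ≤ wtH (fun x : F => f x + Algebra.trace (ZMod 2) F (b*x) + 1) :=
            Nat.sub_le_iff_le_add.mpr hAB
          have hP : 2 ≤ wtH (Fin.cons (0:ZMod 2) (Fin.cons 1 aa) : Fin (m+2) → ZMod 2) :=
            aux_wt_two _ 1 j.succ.succ (by simp [Fin.ext_iff])
              (by rw [h1fin, Fin.cons_succ, Fin.cons_zero]; exact one_ne_zero)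
              (by rw [Fin.cons_succ, Fin.cons_succ]; exact hj)
          refine le_trans ?_ (Nat.add_le_add hP hN)
          omega
      · -- c = 1
        rw [show (fun x : F => (1:ZMod 2) * f x + Algebra.trace (ZMod 2) F (b*x) + 1 + 1)
              = fun x => f x + Algebra.trace (ZMod 2) F (b*x)
              from funext fun x => by
                have hch : ∀ u v : ZMod 2, 1*u+v+1+1 = u+v := by decide
                exact hch _ _]
        have hsum : ∑ x : F, (-1:ℤ)^((f x + Algebra.trace (ZMod 2) F (b*x)).val)
            = walsh2 F f b := rfl
        have hNc := hcount (fun x => f x + Algebra.trace (ZMod 2) F (b*x))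
        rw [hsum] at hNc
        have hup : walsh2 F f b ≤ (2:ℤ)^t := by
          rcases hWval b with h | h | h <;> rw [h] <;> linarith [h2t]
        have hAB : A ≤ wtH (fun x : F => f x + Algebra.trace (ZMod 2) F (b*x)) + B := by
          have hz : (A:ℤ) ≤ (wtH (fun x : F => f x + Algebra.trace (ZMod 2) F (b*x)) : ℤ)
              + (B:ℤ) := by linarith
          exact_mod_cast hz
        have hN : A - B ≤ wtH (fun x : F => f x + Algebra.trace (ZMod 2) F (b*x)) :=
          Nat.sub_le_iff_le_add.mpr hAB
        have hP : 2 ≤ wtH (Fin.cons (1:ZMod 2) (Fin.cons 1 aa) : Fin (m+2) → ZMod 2) :=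
          aux_wt_two _ 0 1 (by simp [Fin.ext_iff])
            (by rw [Fin.cons_zero]; exact one_ne_zero)
            (by rw [h1fin, Fin.cons_succ, Fin.cons_zero]; exact one_ne_zero)
        refine le_trans ?_ (Nat.add_le_add hP hN)
        omega
end

section
/- Let m be an integer and let s be an integer with 0 ≤ s ≤ m−2 such that m+s is even and m+s ≥ 6, and let f : F_q → F_2 (q = 2^m) be an s-plateaued Boolean function with f(0) = 0. Then the minimum distance of C̄_f^⊥ exceeds the minimum distance of (C̄_f')^⊥ by exactly 1 (indeed, the minimum distance of C̄_f^⊥ is 4 and that of (C̄_f')^⊥ is 3); that is, C̄_f is almost optimally extendable. -/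
open Finset

lemma mem_dualCode {n : Type} [Fintype n] {K : Type} [Field K] (S : Set (n → K)) (u : n → K) :
    u ∈ (dualCode S : Set (n → K)) ↔ ∀ v ∈ S, ∑ i, u i * v i = 0 := Iff.rfl




lemma zmod2_ne_zero (t : ZMod 2) (h : t ≠ 0) : t = 1 := by revert t; decide

lemma count_quad (F : Type) [Field F] [Fintype F] (hF2 : ∀ x : F, x + x = 0)
    (m : ℕ) (hm : 3 ≤ m) (hcard : Fintype.card F = 2 ^ m) (f : F → ZMod 2) :
    ∃ x1 x2 x3 x4 : F, x1 + x2 + x3 + x4 = 0 ∧ f x1 + f x2 + f x3 + f x4 = 0 ∧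
      x1 ≠ x2 ∧ x1 ≠ x3 ∧ x1 ≠ x4 ∧ x2 ≠ x3 ∧ x2 ≠ x4 ∧ x3 ≠ x4 := by
  classical
  set g : F → F → ZMod 2 := fun w x => f x + f (x + w) with hg
  set A : Finset (F × F × F) :=
    univ.filter (fun p => g p.1 p.2.1 + g p.1 p.2.2 = 0) with hA
  have hsplit : A.card = ∑ w : F,
      (univ.filter (fun q : F × F => g w q.1 + g w q.2 = 0)).card := by
    rw [hA, Finset.card_filter, Fintype.sum_prod_type]
    exact Finset.sum_congr rfl fun w _ => (Finset.card_filter _ _).symm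
  have hinner : ∀ w : F, 2 ^ (2 * m) ≤
      2 * (univ.filter (fun q : F × F => g w q.1 + g w q.2 = 0)).card := by
    intro w
    set c0 := (univ.filter (fun x : F => g w x = 0)).card with hc0
    set c1 := (univ.filter (fun x : F => g w x = 1)).card with hc1
    have hneg : (univ.filter (fun x : F => ¬ g w x = 0)) = univ.filter (fun x : F => g w x = 1) := by
      ext x
      simp only [Finset.mem_filter, Finset.mem_univ, true_and]
      constructor
      · intro h; exact zmod2_ne_zero _ h
      · intro h; rw [h]; exact one_ne_zero
    have h01 : c0 + c1 = 2 ^ m := by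
      rw [hc0, hc1, ← hneg, Finset.card_filter_add_card_filter_not,
        Finset.card_univ, hcard]
    have hset : univ.filter (fun q : F × F => g w q.1 + g w q.2 = 0) =
        ((univ.filter (fun x : F => g w x = 0)) ×ˢ (univ.filter (fun x : F => g w x = 0))) ∪
        ((univ.filter (fun x : F => g w x = 1)) ×ˢ (univ.filter (fun x : F => g w x = 1))) := by
      ext q
      simp only [Finset.mem_filter, Finset.mem_union, Finset.mem_product, Finset.mem_univ,
        true_and]
      have : ∀ a b : ZMod 2, a + b = 0 ↔ (a = 0 ∧ b = 0) ∨ (a = 1 ∧ b = 1) := by decide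
      exact this _ _
    have hdisj : Disjoint
        ((univ.filter (fun x : F => g w x = 0)) ×ˢ (univ.filter (fun x : F => g w x = 0)))
        ((univ.filter (fun x : F => g w x = 1)) ×ˢ (univ.filter (fun x : F => g w x = 1))) := by
      rw [Finset.disjoint_left]
      intro q h1 h2
      simp only [Finset.mem_product, Finset.mem_filter] at h1 h2
      rw [h1.1.2] at h2
      exact (by decide : (0 : ZMod 2) ≠ 1) h2.1.2
    have hcardeq : (univ.filter (fun q : F × F => g w q.1 + g w q.2 = 0)).card
        = c0 * c0 + c1 * c1 := by
      rw [hset, Finset.card_union_of_disjoint hdisj, Finset.card_product, Finset.card_product]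
    rw [hcardeq]
    have h2 : 2 ^ (2 * m) = (c0 + c1) * (c0 + c1) := by
      rw [h01, two_mul, pow_add]
    rw [h2]
    nlinarith [two_mul_le_add_sq c0 c1, sq_nonneg (c0 - c1)]
  have hAcard : 2 ^ m * 2 ^ (2 * m) ≤ 2 * A.card := by
    rw [hsplit, Finset.mul_sum]
    calc 2 ^ m * 2 ^ (2 * m) = ∑ _w : F, 2 ^ (2 * m) := by
          rw [Finset.sum_const, Finset.card_univ, hcard, smul_eq_mul]
      _ ≤ _ := Finset.sum_le_sum fun w _ => hinner w
  set Bad : Finset (F × F × F) :=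
    univ.filter (fun p => p.1 = 0 ∨ p.2.1 = p.2.2 ∨ p.2.1 = p.2.2 + p.1) with hBadDef
  have hBad : Bad.card ≤ 3 * 2 ^ (2 * m) := by
    have hcard2 : (univ : Finset (F × F)).card = 2 ^ (2 * m) := by
      rw [Finset.card_univ, Fintype.card_prod, hcard, ← pow_add, two_mul]
    have hb1 : (univ.filter (fun p : F × F × F => p.1 = 0)).card ≤ 2 ^ (2 * m) := by
      rw [← hcard2]
      apply Finset.card_le_card_of_injOn (fun p => (p.2.1, p.2.2)) (fun p _ => mem_univ _)
      intro p hp q hq hpq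
      simp only [Finset.mem_coe, Finset.mem_filter] at hp hq
      simp only [Prod.mk.injEq] at hpq
      exact Prod.ext (hp.2.trans hq.2.symm) (Prod.ext hpq.1 hpq.2)
    have hb2 : (univ.filter (fun p : F × F × F => p.2.1 = p.2.2)).card ≤ 2 ^ (2 * m) := by
      rw [← hcard2]
      apply Finset.card_le_card_of_injOn (fun p => (p.1, p.2.2)) (fun p _ => mem_univ _)
      intro p hp q hq hpq
      simp only [Finset.mem_coe, Finset.mem_filter] at hp hq
      simp only [Prod.mk.injEq] at hpq
      refine Prod.ext hpq.1 (Prod.ext ?_ hpq.2)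
      rw [hp.2, hq.2, hpq.2]
    have hb3 : (univ.filter (fun p : F × F × F => p.2.1 = p.2.2 + p.1)).card ≤ 2 ^ (2 * m) := by
      rw [← hcard2]
      apply Finset.card_le_card_of_injOn (fun p => (p.1, p.2.2)) (fun p _ => mem_univ _)
      intro p hp q hq hpq
      simp only [Finset.mem_coe, Finset.mem_filter] at hp hq
      simp only [Prod.mk.injEq] at hpq
      refine Prod.ext hpq.1 (Prod.ext ?_ hpq.2)
      rw [hp.2, hq.2, hpq.1, hpq.2]
    calc Bad.card ≤ (univ.filter (fun p : F × F × F => p.1 = 0)).card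
          + ((univ.filter (fun p : F × F × F => p.2.1 = p.2.2)).card
          + (univ.filter (fun p : F × F × F => p.2.1 = p.2.2 + p.1)).card) := by
          rw [hBadDef, Finset.filter_or, Finset.filter_or]
          exact le_trans (Finset.card_union_le _ _)
            (by exact Nat.add_le_add_left (Finset.card_union_le _ _) _)
      _ ≤ 2 ^ (2 * m) + (2 ^ (2 * m) + 2 ^ (2 * m)) := by
          exact Nat.add_le_add hb1 (Nat.add_le_add hb2 hb3)
      _ = 3 * 2 ^ (2 * m) := by ring
  have h8 : 8 ≤ 2 ^ m := by
    calc (8 : ℕ) = 2 ^ 3 := by norm_num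
      _ ≤ 2 ^ m := Nat.pow_le_pow_right (by norm_num) hm
  have hlt : Bad.card < A.card := by
    nlinarith [hAcard, hBad, h8, (by positivity : 0 < 2 ^ (2*m))]
  have hne : (A \ Bad).Nonempty := by
    rw [Finset.sdiff_nonempty]
    intro hsub
    exact absurd (Finset.card_le_card hsub) (not_le.2 hlt)
  obtain ⟨p, hp⟩ := hne
  rw [Finset.mem_sdiff] at hp
  obtain ⟨hpA, hpB⟩ := hp
  rw [hA, Finset.mem_filter] at hpA
  rw [hBadDef, Finset.mem_filter] at hpB
  push_neg at hpB
  obtain ⟨hw0, hxz, hxzw⟩ := hpB (Finset.mem_univ p)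
  obtain ⟨-, hfsum⟩ := hpA
  simp only [hg] at hfsum
  set w := p.1
  set x := p.2.1
  set z := p.2.2
  refine ⟨x, x + w, z, z + w, ?_, ?_, ?_, hxz, ?_, ?_, ?_, ?_⟩
  · linear_combination hF2 x + hF2 z + hF2 w
  · linear_combination hfsum
  · intro h
    exact hw0 (by linear_combination h.symm)
  · exact hxzw
  · intro h
    exact hxzw (by linear_combination h - hF2 w)
  · intro h
    exact hxz (by linear_combination h)
  · intro h
    exact hw0 (by linear_combination h.symm)

lemma zmod2_one (t : ZMod 2) (h : t ≠ 0) : t = 1 := by revert t; decide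

lemma tr_nondeg (F : Type) [Field F] [Fintype F] [Algebra (ZMod 2) F]
    (z : F) (hz : z ≠ 0) : ∃ b : F, Algebra.trace (ZMod 2) F (b * z) ≠ 0 := by
  have h := Algebra.trace_ne_zero (ZMod 2) F
  obtain ⟨w, hw⟩ : ∃ w : F, Algebra.trace (ZMod 2) F w ≠ 0 := by
    by_contra h'
    push_neg at h'
    exact h (LinearMap.ext fun w => by simp [h' w])
  refine ⟨w * z⁻¹, ?_⟩
  rwa [mul_assoc, inv_mul_cancel₀ hz, mul_one]

lemma trace_basis (F : Type) [Field F] [Fintype F] [Algebra (ZMod 2) F]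
    (m : ℕ) (hcard : Fintype.card F = 2 ^ m) (α : F)
    (hα : ∀ x : F, x ≠ 0 → ∃ k : ℕ, x = α ^ k)
    (y : F) (hy : y ≠ 0) :
    ∃ i : Fin m, Algebra.trace (ZMod 2) F (α ^ (i : ℕ) * y) ≠ 0 := by
  classical
  by_contra hno
  push_neg at hno
  set V : Submodule (ZMod 2) F :=
    LinearMap.ker ((Algebra.trace (ZMod 2) F).comp (LinearMap.mulRight (ZMod 2) y)) with hV
  have hVmem : ∀ z : F, z ∈ V ↔ Algebra.trace (ZMod 2) F (z * y) = 0 := by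
    intro z
    rw [hV, LinearMap.mem_ker, LinearMap.comp_apply, LinearMap.mulRight_apply]
  -- a nontrivial linear relation among 1, α, ..., α^m
  have hdep : ∃ g : Fin (m + 1) → ZMod 2, (∑ i, g i • α ^ (i : ℕ)) = 0 ∧ g ≠ 0 := by
    by_contra hA
    push_neg at hA
    have hinj : Function.Injective (fun g : Fin (m + 1) → ZMod 2 => ∑ i, g i • α ^ (i : ℕ)) := by
      intro g1 g2 hg
      simp only at hg
      have hsub : (∑ i, (g1 - g2) i • α ^ (i : ℕ)) = 0 := by
        simp only [Pi.sub_apply, sub_smul, Finset.sum_sub_distrib]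
        rw [hg, sub_self]
      exact sub_eq_zero.mp (hA _ hsub)
    have hcardle := Fintype.card_le_of_injective _ hinj
    rw [Fintype.card_fun, Fintype.card_fin, ZMod.card, hcard] at hcardle
    have : (2 : ℕ) ^ m < 2 ^ (m + 1) :=
      Nat.pow_lt_pow_right (by norm_num) (Nat.lt_succ_self m)
    omega
  obtain ⟨g, hgsum, hgne⟩ := hdep
  set T : Finset (Fin (m + 1)) := univ.filter (fun i => g i ≠ 0) with hT
  have hTne : T.Nonempty := by
    obtain ⟨i, hi⟩ := Function.ne_iff.mp hgne
    exact ⟨i, by simp only [hT, Finset.mem_filter, Finset.mem_univ, true_and]; simpa using hi⟩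
  set j := T.max' hTne with hj
  have hgj : g j = 1 := zmod2_one _ (Finset.mem_filter.mp (T.max'_mem hTne)).2
  have hle : ∀ i ∈ T, i ≤ j := fun i hi => T.le_max' i hi
  set S : Submodule (ZMod 2) F :=
    Submodule.span (ZMod 2) ((fun i : ℕ => α ^ i) '' (Set.Iio (j : ℕ))) with hS
  have hαj : α ^ (j : ℕ) ∈ S := by
    have hsum' : g j • α ^ ((j : Fin (m+1)) : ℕ)
        + ∑ i ∈ univ.erase j, g i • α ^ (i : ℕ) = 0 := by
      rw [Finset.add_sum_erase univ (fun i : Fin (m+1) => g i • α ^ (i : ℕ)) (mem_univ j)]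
      exact hgsum
    rw [hgj, one_smul] at hsum'
    have hmem : ∑ i ∈ univ.erase j, g i • α ^ (i : ℕ) ∈ S := by
      apply Submodule.sum_mem
      intro i hi
      by_cases hgi : g i = 0
      · rw [hgi, zero_smul]; exact zero_mem _
      · have hiT : i ∈ T := by simp [hT, hgi]
        have hij : i < j := lt_of_le_of_ne (hle i hiT) (Finset.ne_of_mem_erase hi)
        exact Submodule.smul_mem _ _ (Submodule.subset_span ⟨(i : ℕ), hij, rfl⟩)
    rw [eq_neg_of_add_eq_zero_left hsum']
    exact S.neg_mem hmem
  have hjpos : 0 < (j : ℕ) := by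
    rcases Nat.eq_zero_or_pos (j : ℕ) with h0 | h
    · exfalso
      rw [h0, pow_zero] at hαj
      have : (Set.Iio (0:ℕ)) = ∅ := by ext n; simp
      rw [hS, h0, this, Set.image_empty, Submodule.span_empty, Submodule.mem_bot] at hαj
      exact one_ne_zero hαj
    · exact h
  have hclosed : ∀ z ∈ S, α * z ∈ S := by
    intro z hz
    induction hz using Submodule.span_induction with
    | mem w hw =>
      obtain ⟨i, hi, rfl⟩ := hw
      have hi' : i < (j : ℕ) := hi
      rw [← pow_succ']
      rcases Nat.lt_or_ge (i + 1) (j : ℕ) with h' | h'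
      · exact Submodule.subset_span ⟨i + 1, h', rfl⟩
      · have : i + 1 = (j : ℕ) := by omega

        rw [this]; exact hαj
    | zero => rw [mul_zero]; exact zero_mem _
    | add a b _ _ ha hb => rw [mul_add]; exact add_mem ha hb
    | smul c a _ ha => rw [mul_smul_comm]; exact Submodule.smul_mem _ _ ha
  have hpow : ∀ k : ℕ, α ^ k ∈ S := by
    intro k
    induction k with
    | zero => exact Submodule.subset_span ⟨0, hjpos, rfl⟩
    | succ n ih =>
      rw [pow_succ, mul_comm]
      exact hclosed _ ih
  have hSV : S ≤ V := by
    rw [hS]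
    apply Submodule.span_le.mpr
    rintro _ ⟨i, hi, rfl⟩
    rw [SetLike.mem_coe, hVmem]
    have him : i < m := lt_of_lt_of_le hi (Nat.lt_succ_iff.mp j.isLt)
    exact hno ⟨i, him⟩
  have htop : ∀ z : F, Algebra.trace (ZMod 2) F (z * y) = 0 := by
    intro z
    rcases eq_or_ne z 0 with rfl | hz
    · rw [zero_mul, map_zero]
    · obtain ⟨k, rfl⟩ := hα z hz
      exact (hVmem _).mp (hSV (hpow k))
  obtain ⟨b, hb⟩ := tr_nondeg F y hy
  exact hb (htop b)

lemma part1 (m : ℕ) (hm : 3 ≤ m) (F : Type) [Field F] [Fintype F] [Algebra (ZMod 2) F]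
    (hcard : Fintype.card F = 2 ^ m) (f : F → ZMod 2) (hF2 : ∀ x : F, x + x = 0)
    (hz2 : ∀ t : ZMod 2, t + t = 0) :
    hasMinDist (dualCode (codeCbar 2 F f) : Set (F → ZMod 2)) 4 := by
  classical
  obtain ⟨x1, x2, x3, x4, hsum, hfsum, h12, h13, h14, h23, h24, h34⟩ :=
    count_quad F hF2 m hm hcard f
  constructor
  · -- existence of weight-4 codeword
    set S4 : Finset F := {x1, x2, x3, x4} with hS4
    have hnm1 : x1 ∉ ({x2, x3, x4} : Finset F) := by simp [h12, h13, h14]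
    have hnm2 : x2 ∉ ({x3, x4} : Finset F) := by simp [h23, h24]
    have hnm3 : x3 ∉ ({x4} : Finset F) := by simp [h34]
    set v : F → ZMod 2 := fun x => if x ∈ S4 then 1 else 0 with hv
    have hsum_v : ∀ G : F → ZMod 2, ∑ x : F, v x * G x = G x1 + G x2 + G x3 + G x4 := by
      intro G
      simp only [hv, ite_mul, one_mul, zero_mul]
      rw [Finset.sum_ite_mem, Finset.univ_inter, hS4, Finset.sum_insert hnm1,
        Finset.sum_insert hnm2, Finset.sum_insert hnm3, Finset.sum_singleton]
      ring
    have hv1 : v x1 = 1 := by rw [hv]; simp [hS4]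
    refine ⟨v, ?_, ?_, ?_⟩
    · rw [mem_dualCode]
      rintro vv ⟨a, c, b, rfl⟩
      rw [hsum_v]
      have hTr4 : Algebra.trace (ZMod 2) F (b * x1) + Algebra.trace (ZMod 2) F (b * x2)
          + Algebra.trace (ZMod 2) F (b * x3) + Algebra.trace (ZMod 2) F (b * x4) = 0 := by
        rw [← map_add, ← map_add, ← map_add, ← mul_add, ← mul_add, ← mul_add, hsum,
          mul_zero, map_zero]
      linear_combination a * hfsum + hTr4 + 2 * hz2 c
    · intro h
      apply one_ne_zero (α := ZMod 2)
      rw [← hv1, h]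
      rfl
    · have hfilt : univ.filter (fun x => v x ≠ 0) = S4 := by
        ext x
        simp only [hv, Finset.mem_filter, Finset.mem_univ, true_and, ne_eq,
          ite_eq_right_iff, one_ne_zero, imp_false, not_not]
      show (univ.filter (fun x => v x ≠ 0)).card = 4
      rw [hfilt, hS4, Finset.card_insert_of_notMem hnm1, Finset.card_insert_of_notMem hnm2,
        Finset.card_insert_of_notMem hnm3, Finset.card_singleton]
  · -- lower bound
    intro v hv hvne
    rw [mem_dualCode] at hv
    have c1 : ∑ x : F, v x = 0 := by
      have := hv _ ⟨0, 1, 0, rfl⟩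
      simpa using this
    have c2 : ∀ b : F, ∑ x : F, v x * Algebra.trace (ZMod 2) F (b * x) = 0 := by
      intro b
      have := hv _ ⟨0, 0, b, rfl⟩
      simpa using this
    set T := univ.filter (fun x => v x ≠ 0) with hT
    have hvT : ∀ x ∈ T, v x = 1 := fun x hx => zmod2_ne_zero _ (Finset.mem_filter.mp hx).2
    have hout : ∀ x ∈ univ, x ∉ T → v x = 0 := by
      intro x _ hx
      by_contra hne
      exact hx (Finset.mem_filter.mpr ⟨mem_univ x, hne⟩)
    have hsupp : ∀ G : F → ZMod 2, ∑ x : F, v x * G x = ∑ x ∈ T, G x := by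
      intro G
      rw [← Finset.sum_subset (Finset.subset_univ T)
        (fun x hx hxT => by rw [hout x hx hxT, zero_mul])]
      exact Finset.sum_congr rfl fun x hx => by rw [hvT x hx, one_mul]
    have hcast : (T.card : ZMod 2) = 0 := by
      calc (T.card : ZMod 2) = ∑ _x ∈ T, (1 : ZMod 2) := by
            rw [Finset.sum_const, nsmul_eq_mul, mul_one]
        _ = ∑ x ∈ T, v x := Finset.sum_congr rfl fun x hx => (hvT x hx).symm
        _ = ∑ x : F, v x := Finset.sum_subset (Finset.subset_univ T) hout
        _ = 0 := c1
    have hdvd : 2 ∣ T.card := by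
      rwa [ZMod.natCast_eq_zero_iff] at hcast
    have hcard0 : T.card ≠ 0 := by
      intro h
      apply hvne
      funext x
      have hxT : x ∉ T := by
        rw [Finset.card_eq_zero] at h
        rw [h]
        exact Finset.notMem_empty x
      exact hout x (mem_univ x) hxT
    have hcard2 : T.card ≠ 2 := by
      intro h
      obtain ⟨a, b, hab, hTab⟩ := Finset.card_eq_two.mp h
      have hzero : ∑ x ∈ T, x = 0 := by
        by_contra hz
        obtain ⟨b', hb'⟩ := tr_nondeg F _ hz
        apply hb'
        have hc := c2 b'
        rw [hsupp] at hc
        rw [Finset.mul_sum, map_sum]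
        exact hc
      rw [hTab, Finset.sum_pair hab] at hzero
      exact hab (by linear_combination hzero - hF2 b)
    show 4 ≤ (univ.filter (fun x => v x ≠ 0)).card
    rw [← hT]
    omega

lemma zmod2_add_one (a : ZMod 2) (h : a + 1 = 0) : a = 1 := by revert a; decide

lemma part2 (m : ℕ) (F : Type) [Field F] [Fintype F] [Algebra (ZMod 2) F]
    (hcard : Fintype.card F = 2 ^ m) (α : F) (hα : ∀ x : F, x ≠ 0 → ∃ k : ℕ, x = α ^ k)
    (f : F → ZMod 2) (hf0 : f 0 = 0) (hF2 : ∀ x : F, x + x = 0)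
    (hz2 : ∀ t : ZMod 2, t + t = 0) :
    hasMinDist (dualCode (extCode 2 m F f α) : Set (Fin (m + 2) ⊕ F → ZMod 2)) 3 := by
  classical
  have h01 : (0 : Fin (m + 2)) ≠ 1 := by
    intro h
    exact Fin.succ_ne_zero (0 : Fin (m + 1)) (Fin.succ_zero_eq_one ▸ h.symm)
  have hss0 : ∀ i : Fin m, (i.succ.succ : Fin (m + 2)) ≠ 0 := fun i => Fin.succ_ne_zero _
  have hss1 : ∀ i : Fin m, (i.succ.succ : Fin (m + 2)) ≠ 1 := by
    intro i h
    rw [← Fin.succ_zero_eq_one] at h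
    exact Fin.succ_ne_zero i (Fin.succ_inj.mp h)
  constructor
  · -- existence of a weight-3 dual word
    set v : Fin (m + 2) ⊕ F → ZMod 2 :=
      Sum.elim (fun j : Fin (m + 2) => if j = 0 ∨ j = 1 then 1 else 0)
        (fun x : F => if x = 0 then 1 else 0) with hvdef
    refine ⟨v, ?_, ?_, ?_⟩
    · rw [mem_dualCode]
      rintro vv ⟨c, a, aa, rfl⟩
      rw [Fintype.sum_sum_type]
      simp only [Sum.elim_inl, Sum.elim_inr]
      have hfin : ∑ j : Fin (m + 2), v (Sum.inl j) * (Fin.cons c (Fin.cons a aa) : Fin (m + 2) → ZMod 2) j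
          = c + a := by
        rw [Fin.sum_univ_succ, Fin.sum_univ_succ]
        simp only [hvdef, Sum.elim_inl, Fin.cons_zero, Fin.cons_succ, Fin.succ_zero_eq_one]
        rw [Finset.sum_eq_zero (fun i _ => by
          simp only [hss0 i, hss1 i, or_self, if_false, zero_mul])]
        simp
      have hF : ∑ x : F, v (Sum.inr x) *
          (a * f x + Algebra.trace (ZMod 2) F ((∑ i : Fin m, aa i • α ^ (i : ℕ)) * x) + a + c)
          = a + c := by
        simp only [hvdef, Sum.elim_inr, ite_mul, one_mul, zero_mul]
        rw [Finset.sum_ite_eq' univ (0 : F)]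
        simp [hf0]
      rw [hfin, hF]
      linear_combination hz2 a + hz2 c
    · intro h
      have h1 : v (Sum.inl 0) = 1 := by simp [hvdef]
      apply one_ne_zero (α := ZMod 2)
      rw [← h1, h]
      rfl
    · have hfilt : univ.filter (fun j => v j ≠ 0) =
          {Sum.inl 0, Sum.inl 1, Sum.inr 0} := by
        ext j
        rcases j with jj | x
        · simp only [hvdef, Sum.elim_inl, Finset.mem_filter, Finset.mem_univ, true_and,
            Finset.mem_insert, Finset.mem_singleton, ne_eq, ite_eq_right_iff, one_ne_zero,
            imp_false, not_not, Sum.inl.injEq, reduceCtorEq, or_false]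
        · simp only [hvdef, Sum.elim_inr, Finset.mem_filter, Finset.mem_univ, true_and,
            Finset.mem_insert, Finset.mem_singleton, ne_eq, ite_eq_right_iff, one_ne_zero,
            imp_false, not_not, Sum.inr.injEq, reduceCtorEq, false_or]
      show (univ.filter (fun j => v j ≠ 0)).card = 3
      rw [hfilt]
      rw [Finset.card_insert_of_notMem (by simp [h01]),
        Finset.card_insert_of_notMem (by simp), Finset.card_singleton]
  · -- lower bound
    intro u hu hune
    rw [mem_dualCode] at hu
    have c1 : u (Sum.inl 0) + ∑ x : F, u (Sum.inr x) = 0 := by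
      have := hu _ ⟨1, 0, fun _ => 0, rfl⟩
      simp only [Fintype.sum_sum_type, Sum.elim_inl, Sum.elim_inr, Fin.sum_univ_succ,
        Fin.cons_zero, Fin.cons_succ, zero_smul, Finset.sum_const_zero, zero_mul, map_zero,
        mul_zero, mul_one, zero_add, add_zero, Fin.succ_zero_eq_one] at this
      convert this using 2
    have c2 : u (Sum.inl 1) + ∑ x : F, u (Sum.inr x) * (f x + 1) = 0 := by
      have := hu _ ⟨0, 1, fun _ => 0, rfl⟩
      simp only [Fintype.sum_sum_type, Sum.elim_inl, Sum.elim_inr, Fin.sum_univ_succ,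
        Fin.cons_zero, Fin.cons_succ, zero_smul, Finset.sum_const_zero, zero_mul, map_zero,
        mul_zero, mul_one, one_mul, zero_add, add_zero, Fin.succ_zero_eq_one] at this
      convert this using 2
    have c3 : ∀ i : Fin m, u (Sum.inl (i.succ.succ)) +
        ∑ x : F, u (Sum.inr x) * Algebra.trace (ZMod 2) F (α ^ (i : ℕ) * x) = 0 := by
      intro i
      have := hu _ ⟨0, 0, Pi.single i 1, rfl⟩
      simp only [Fintype.sum_sum_type, Sum.elim_inl, Sum.elim_inr, Fin.sum_univ_succ,
        Fin.cons_zero, Fin.cons_succ, zero_mul, map_zero,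
        mul_zero, mul_one, zero_add, add_zero] at this
      rw [Finset.sum_eq_single i (fun j _ hj => by
          rw [Pi.single_eq_of_ne hj, mul_zero]) (by simp)] at this
      rw [Pi.single_eq_same, mul_one] at this
      have hb : (∑ j : Fin m, (Pi.single i (1:ZMod 2) : Fin m → ZMod 2) j • α ^ (j:ℕ))
          = α ^ (i:ℕ) := by
        rw [Finset.sum_eq_single i (fun j _ hj => by rw [Pi.single_eq_of_ne hj, zero_smul])
          (by simp)]
        rw [Pi.single_eq_same, one_smul]
      rw [hb] at this
      exact this
    set T := univ.filter (fun x : F => u (Sum.inr x) ≠ 0) with hT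
    have huT : ∀ x ∈ T, u (Sum.inr x) = 1 :=
      fun x hx => zmod2_ne_zero _ (Finset.mem_filter.mp hx).2
    have hout : ∀ x ∈ univ, x ∉ T → u (Sum.inr x) = 0 := by
      intro x _ hx
      by_contra hne
      exact hx (Finset.mem_filter.mpr ⟨mem_univ x, hne⟩)
    have hsuppF : ∀ G : F → ZMod 2, ∑ x : F, u (Sum.inr x) * G x = ∑ x ∈ T, G x := by
      intro G
      rw [← Finset.sum_subset (Finset.subset_univ T)
        (fun x hx hxT => by rw [hout x hx hxT, zero_mul])]
      exact Finset.sum_congr rfl fun x hx => by rw [huT x hx, one_mul]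
    have hplain : ∑ x : F, u (Sum.inr x) = ∑ x ∈ T, (1 : ZMod 2) := by
      rw [← Finset.sum_subset (Finset.subset_univ T) hout]
      exact Finset.sum_congr rfl huT
    have hsub3 : ∀ (j1 j2 j3 : Fin (m + 2) ⊕ F), j1 ≠ j2 → j1 ≠ j3 → j2 ≠ j3 →
        u j1 ≠ 0 → u j2 ≠ 0 → u j3 ≠ 0 → 3 ≤ wtH u := by
      intro j1 j2 j3 h12 h13 h23 hu1 hu2 hu3
      have hsub : ({j1, j2, j3} : Finset _) ⊆ univ.filter (fun j => u j ≠ 0) := by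
        intro j hj
        simp only [Finset.mem_insert, Finset.mem_singleton] at hj
        rcases hj with rfl | rfl | rfl <;> simp only [Finset.mem_filter, Finset.mem_univ,
          true_and] <;> assumption
      calc 3 = ({j1, j2, j3} : Finset (Fin (m + 2) ⊕ F)).card := by
            rw [Finset.card_insert_of_notMem (by simp [h12, h13]),
              Finset.card_insert_of_notMem (by simp [h23]), Finset.card_singleton]
        _ ≤ _ := Finset.card_le_card hsub
    rcases Nat.lt_or_ge T.card 3 with hTc | hTc
    · interval_cases hc : T.card
      · -- card 0 : u = 0, contradiction
        exfalso
        apply hune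
        have hTempty : T = ∅ := Finset.card_eq_zero.mp hc
        have hz : ∀ x : F, u (Sum.inr x) = 0 := fun x =>
          hout x (mem_univ x) (by rw [hTempty]; exact Finset.notMem_empty x)
        have h0 : u (Sum.inl 0) = 0 := by
          have := c1
          rw [Finset.sum_eq_zero (fun x _ => hz x), add_zero] at this
          exact this
        have h1 : u (Sum.inl 1) = 0 := by
          have := c2
          rw [Finset.sum_eq_zero (fun x _ => by rw [hz x, zero_mul]), add_zero] at this
          exact this
        have h3 : ∀ i : Fin m, u (Sum.inl i.succ.succ) = 0 := by
          intro i
          have := c3 i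
          rw [Finset.sum_eq_zero (fun x _ => by rw [hz x, zero_mul]), add_zero] at this
          exact this
        funext j
        rcases j with jj | x
        · refine Fin.cases ?_ (fun k => ?_) jj
          · exact h0
          · refine Fin.cases ?_ (fun i => ?_) k
            · rw [Fin.succ_zero_eq_one]; exact h1
            · exact h3 i
        · exact hz x
      · -- card 1
        obtain ⟨y, hTy⟩ := Finset.card_eq_one.mp hc
        have hyT : y ∈ T := by rw [hTy]; exact Finset.mem_singleton_self y
        have huy : u (Sum.inr y) = 1 := huT y hyT
        have hu0 : u (Sum.inl 0) = 1 := by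
          apply zmod2_add_one
          rw [← c1, hplain, hTy, Finset.sum_singleton]
        rcases eq_or_ne y 0 with rfl | hy0
        · have hu1 : u (Sum.inl 1) = 1 := by
            apply zmod2_add_one
            rw [← c2, hsuppF, hTy, Finset.sum_singleton, hf0, zero_add]
          refine hsub3 (Sum.inl 0) (Sum.inl 1) (Sum.inr 0) (by simp [h01]) (by simp)
            (by simp) ?_ ?_ ?_ <;> simp [hu0, hu1, huy]
        · obtain ⟨i, hi⟩ := trace_basis F m hcard α hα y hy0
          have htr1 : Algebra.trace (ZMod 2) F (α ^ (i : ℕ) * y) = 1 := zmod2_ne_zero _ hi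
          have hui : u (Sum.inl i.succ.succ) = 1 := by
            apply zmod2_add_one
            rw [← c3 i, hsuppF, hTy, Finset.sum_singleton, htr1]
          refine hsub3 (Sum.inl 0) (Sum.inl i.succ.succ) (Sum.inr y)
            (by simp [(hss0 i).symm]) (by simp) (by simp) ?_ ?_ ?_ <;>
            simp [hu0, hui, huy]
      · -- card 2
        obtain ⟨y, z, hyz, hTyz⟩ := Finset.card_eq_two.mp hc
        have hyT : y ∈ T := by rw [hTyz]; exact Finset.mem_insert_self y {z}
        have hzT : z ∈ T := by rw [hTyz]; exact Finset.mem_insert_of_mem (Finset.mem_singleton_self z)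
        have hw : y + z ≠ 0 := by
          intro h
          exact hyz (by linear_combination h - hF2 z)
        obtain ⟨i, hi⟩ := trace_basis F m hcard α hα _ hw
        have htr1 : Algebra.trace (ZMod 2) F (α ^ (i : ℕ) * (y + z)) = 1 := zmod2_ne_zero _ hi
        have hui : u (Sum.inl i.succ.succ) = 1 := by
          apply zmod2_add_one
          rw [← c3 i, hsuppF, hTyz, Finset.sum_pair hyz, ← map_add, ← mul_add, htr1]
        refine hsub3 (Sum.inl i.succ.succ) (Sum.inr y) (Sum.inr z)
          (by simp) (by simp) (by simp [hyz]) ?_ ?_ ?_ <;>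
          simp [hui, huT y hyT, huT z hzT]
    · -- card ≥ 3
      have himg : T.image Sum.inr ⊆ univ.filter (fun j => u j ≠ 0) := by
        intro j hj
        obtain ⟨x, hx, rfl⟩ := Finset.mem_image.mp hj
        exact Finset.mem_filter.mpr ⟨mem_univ _, (Finset.mem_filter.mp hx).2⟩
      calc 3 ≤ T.card := hTc
        _ = (T.image Sum.inr).card := (Finset.card_image_of_injective T Sum.inr_injective).symm
        _ ≤ _ := Finset.card_le_card himg


theorem statement17 (m s : ℕ) (hs : s ≤ m - 2) (hpar : Even (m + s)) (hms : 6 ≤ m + s)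
    (F : Type) [Field F] [Fintype F] [Algebra (ZMod 2) F]
    (hcard : Fintype.card F = 2 ^ m)
    (α : F) (hα : ∀ x : F, x ≠ 0 → ∃ k : ℕ, x = α ^ k)
    (f : F → ZMod 2) (hf0 : f 0 = 0) (hpl : IsPlateaued2 m s F f) :
    hasMinDist (dualCode (codeCbar 2 F f) : Set (F → ZMod 2)) 4 ∧
    hasMinDist (dualCode (extCode 2 m F f α) : Set (Fin (m + 2) ⊕ F → ZMod 2)) 3 := by
  have hm : 3 ≤ m := by omega
  have hz2 : ∀ t : ZMod 2, t + t = 0 := by decide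
  have h11 : (1 + 1 : F) = 0 := by
    have h0 : ((1 : ZMod 2) + 1) = 0 := by decide
    calc (1 + 1 : F) = algebraMap (ZMod 2) F 1 + algebraMap (ZMod 2) F 1 := by rw [map_one]
      _ = algebraMap (ZMod 2) F (1 + 1) := by rw [map_add]
      _ = 0 := by rw [h0, map_zero]
  have hF2 : ∀ x : F, x + x = 0 := fun x => by linear_combination x * h11
  exact ⟨part1 m hm F hcard f hF2 hz2, part2 m F hcard α hα f hf0 hF2 hz2⟩
end

section
/- Let m be an integer and let s be an integer with 0 ≤ s ≤ m−2 such that m+s is even and m+s ≥ 6, and let f : F_q → F_2 (q = 2^m) be an s-plateaued Boolean function with f(0) = 0. Then there exists a self-dual binary linear code D of length 2^m and dimension 2^{m−1} with D ⊆ C̄_f^⊥, i.e. the dual of the binary code C̄_f contains a self-dual subcode. -/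
open Module Finset

section Aux

/-- The dot-product bilinear form on `n → K`. -/
noncomputable def dotB (n : Type) [Fintype n] (K : Type) [CommRing K] :
    LinearMap.BilinForm K (n → K) :=
  LinearMap.mk₂ K (fun u v => ∑ i, u i * v i)
    (fun u u' v => by simp [add_mul, Finset.sum_add_distrib])
    (fun c u v => by simp [Finset.mul_sum, mul_assoc])
    (fun u v v' => by simp [mul_add, Finset.sum_add_distrib])
    (fun c u v => by simp [Finset.mul_sum, mul_left_comm])

lemma dotB_apply {n : Type} [Fintype n] {K : Type} [CommRing K] (u v : n → K) :
    dotB n K u v = ∑ i, u i * v i := rfl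

lemma dotB_comm {n : Type} [Fintype n] {K : Type} [CommRing K] (u v : n → K) :
    dotB n K u v = dotB n K v u := by
  simp [dotB_apply, mul_comm]

lemma dotB_nondeg {n : Type} [Fintype n] [DecidableEq n] {K : Type} [Field K] :
    (dotB n K).Nondegenerate := by
  refine (LinearMap.IsRefl.nondegenerate_iff_separatingLeft
    (fun u v h => by rwa [dotB_comm])).mpr ?_
  intro u hu
  funext i
  have := hu (Pi.single i 1)
  rw [dotB_apply, Finset.sum_eq_single i (fun b _ hb => by simp [Pi.single_eq_of_ne hb])
    (fun h => absurd (Finset.mem_univ i) h)] at this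
  simpa using this

/-- Extension of a totally isotropic subspace over `ZMod 2` to a self-dual one. -/
lemma selfdual_extend {V : Type} [AddCommGroup V] [Module (ZMod 2) V]
    [FiniteDimensional (ZMod 2) V] (B : LinearMap.BilinForm (ZMod 2) V)
    (hsymm : ∀ u v, B u v = B v u) (hnd : B.Nondegenerate)
    (heven : Even (finrank (ZMod 2) V)) :
    ∀ k : ℕ, ∀ D : Submodule (ZMod 2) V, D ≤ B.orthogonal D →
      finrank (ZMod 2) V - 2 * finrank (ZMod 2) D ≤ k →
      ∃ E : Submodule (ZMod 2) V, D ≤ E ∧ E = B.orthogonal E ∧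
        2 * finrank (ZMod 2) E = finrank (ZMod 2) V := by
  have hrefl : B.IsRefl := fun u v h => by rwa [hsymm]
  have horth : ∀ D : Submodule (ZMod 2) V,
      finrank (ZMod 2) (B.orthogonal D) = finrank (ZMod 2) V - finrank (ZMod 2) D :=
    fun D => LinearMap.BilinForm.finrank_orthogonal hnd D
  intro k
  induction k with
  | zero =>
    intro D hD hk
    have h1 : finrank (ZMod 2) D ≤ finrank (ZMod 2) (B.orthogonal D) :=
      Submodule.finrank_mono hD
    have h2 : finrank (ZMod 2) D ≤ finrank (ZMod 2) V := Submodule.finrank_le D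
    rw [horth D] at h1
    have heq : 2 * finrank (ZMod 2) D = finrank (ZMod 2) V := by omega
    exact ⟨D, le_rfl, Submodule.eq_of_le_of_finrank_le hD (by rw [horth D]; omega), heq⟩
  | succ k ih =>
    intro D hD hk
    have h1 : finrank (ZMod 2) D ≤ finrank (ZMod 2) (B.orthogonal D) :=
      Submodule.finrank_mono hD
    have h2 : finrank (ZMod 2) D ≤ finrank (ZMod 2) V := Submodule.finrank_le D
    rw [horth D] at h1
    by_cases hcase : 2 * finrank (ZMod 2) D = finrank (ZMod 2) V
    · exact ⟨D, le_rfl, Submodule.eq_of_le_of_finrank_le hD (by rw [horth D]; omega), hcase⟩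
    -- strict: find isotropic vector outside D
    have hlt : 2 * finrank (ZMod 2) D + 2 ≤ finrank (ZMod 2) V := by
      obtain ⟨t, ht⟩ := heven
      omega
    have hvex : ∃ v, v ∈ B.orthogonal D ∧ v ∉ D ∧ B v v = 0 := by
      by_contra hno
      push_neg at hno
      -- get v ∈ orth D \ D
      have hDlt : D < B.orthogonal D := by
        refine lt_of_le_of_ne hD (fun h => hcase ?_)
        have h3 : finrank (ZMod 2) D = finrank (ZMod 2) (B.orthogonal D) := by rw [← h]
        rw [horth D] at h3
        omega
      obtain ⟨v, hvO, hvD⟩ := SetLike.exists_of_lt hDlt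
      have hv0 : v ≠ 0 := fun h => hvD (h ▸ D.zero_mem)
      -- get w ∈ orth D \ (D ⊔ span v)
      have hrk : finrank (ZMod 2) (D ⊔ (ZMod 2) ∙ v : Submodule (ZMod 2) V)
          ≤ finrank (ZMod 2) D + 1 := by
        have := Submodule.finrank_sup_add_finrank_inf_eq D ((ZMod 2) ∙ v)
        rw [finrank_span_singleton hv0] at this
        omega
      have hnle : ¬ (B.orthogonal D ≤ D ⊔ (ZMod 2) ∙ v) := by
        intro hle
        have := Submodule.finrank_mono hle
        rw [horth D] at this
        omega
      obtain ⟨w, hwO, hwD⟩ := SetLike.not_le_iff_exists.mp hnle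
      have hwD' : w ∉ D := fun h => hwD (Submodule.mem_sup_left h)
      have hvw : v + w ∈ B.orthogonal D := Submodule.add_mem _ hvO hwO
      have hvv0 : v + v = 0 := by
        rw [← two_smul (ZMod 2) v, show (2 : ZMod 2) = 0 by decide, zero_smul]
      have hvwD : v + w ∉ D := by
        intro h
        have hw2 : w = (v + w) + v := by
          rw [add_comm v w, add_assoc, hvv0, add_zero]
        exact hwD (hw2 ▸ Submodule.add_mem _ (Submodule.mem_sup_left h)
          (Submodule.mem_sup_right (Submodule.mem_span_singleton_self v)))
      have h1v : B v v ≠ 0 := hno v hvO hvD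
      have h1w : B w w ≠ 0 := hno w hwO hwD'
      refine hno _ hvw hvwD ?_
      have e : B (v + w) (v + w) = B v v + B w v + (B v w + B w w) := by
        simp only [map_add, LinearMap.add_apply]
      rw [e, hsymm w v]
      revert h1v h1w
      generalize B v v = a; generalize B w w = b; generalize B v w = x
      revert a b x; decide
    obtain ⟨v, hvO, hvD, hvv⟩ := hvex
    have hv0 : v ≠ 0 := fun h => hvD (h ▸ D.zero_mem)
    have hE'rk : finrank (ZMod 2) (D ⊔ (ZMod 2) ∙ v : Submodule (ZMod 2) V)
        = finrank (ZMod 2) D + 1 := by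
      have hinf : D ⊓ ((ZMod 2) ∙ v) = ⊥ := by
        rw [Submodule.eq_bot_iff]
        rintro x ⟨hxD, hxv⟩
        obtain ⟨c, rfl⟩ := Submodule.mem_span_singleton.mp hxv
        rcases (by decide : ∀ c : ZMod 2, c = 0 ∨ c = 1) c with rfl | rfl
        · simp
        · exact absurd (by simpa using hxD) hvD
      have := Submodule.finrank_sup_add_finrank_inf_eq D ((ZMod 2) ∙ v)
      rw [finrank_span_singleton hv0, hinf, finrank_bot] at this
      omega
    have hE'iso : (D ⊔ (ZMod 2) ∙ v : Submodule (ZMod 2) V)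
        ≤ B.orthogonal (D ⊔ (ZMod 2) ∙ v) := by
      intro a ha
      rw [LinearMap.BilinForm.mem_orthogonal_iff]
      intro b hb
      obtain ⟨d₁, hd₁, x₁, hx₁, rfl⟩ := Submodule.mem_sup.mp ha
      obtain ⟨d₂, hd₂, x₂, hx₂, rfl⟩ := Submodule.mem_sup.mp hb
      obtain ⟨c₁, rfl⟩ := Submodule.mem_span_singleton.mp hx₁
      obtain ⟨c₂, rfl⟩ := Submodule.mem_span_singleton.mp hx₂
      have e1 : B d₂ d₁ = 0 := hD hd₁ d₂ hd₂
      have e2 : B d₂ v = 0 := hvO d₂ hd₂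
      have e3 : B v d₁ = 0 := by rw [hsymm]; exact hvO d₁ hd₁
      show B (d₂ + c₂ • v) (d₁ + c₁ • v) = 0
      simp [e1, e2, e3, hvv]
    obtain ⟨E, hE1, hE2, hE3⟩ := ih _ hE'iso (by rw [hE'rk]; omega)
    exact ⟨E, le_trans le_sup_left hE1, hE2, hE3⟩

end Aux




open Finset

section Aux2

lemma zmod2_cases : ∀ c : ZMod 2, c = 0 ∨ c = 1 := by decide

lemma neg_one_pow_add' : ∀ a b : ZMod 2,
    ((-1:ℤ))^((a+b).val) = (-1)^a.val * (-1)^b.val := by decide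

lemma neg_one_pow_succ' : ∀ t : ZMod 2, ((-1:ℤ))^((t+1).val) = -(-1)^t.val := by decide

lemma four_mul_val : ∀ a b : ZMod 2, (4:ℤ) * ((a.val : ℤ) * (b.val : ℤ))
    = 1 - (-1)^a.val - (-1)^b.val + (-1)^((a+b).val) := by decide

variable {F : Type} [Field F] [Fintype F] [Algebra (ZMod 2) F]

lemma sum_neg_one_trace (h8 : (8:ℤ) ∣ (Fintype.card F : ℤ)) (b : F) :
    (8:ℤ) ∣ ∑ x : F, (-1:ℤ)^((Algebra.trace (ZMod 2) F (b * x)).val) := by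
  by_cases hall : ∀ x : F, Algebra.trace (ZMod 2) F (b * x) = 0
  · have h1 : ∑ x : F, (-1:ℤ)^((Algebra.trace (ZMod 2) F (b*x)).val) = ∑ _x : F, (1:ℤ) :=
      Finset.sum_congr rfl (fun x _ => by rw [hall x]; norm_num)
    rw [h1, Finset.sum_const, Finset.card_univ, nsmul_eq_mul, mul_one]
    exact h8
  · push_neg at hall
    obtain ⟨x₀, hx₀⟩ := hall
    have hx₀' : Algebra.trace (ZMod 2) F (b * x₀) = 1 := by
      rcases zmod2_cases (Algebra.trace (ZMod 2) F (b * x₀)) with h | h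
      · exact absurd h hx₀
      · exact h
    have key : ∑ x : F, (-1:ℤ)^((Algebra.trace (ZMod 2) F (b*x)).val)
        = - ∑ x : F, (-1:ℤ)^((Algebra.trace (ZMod 2) F (b*x)).val) := by
      nth_rewrite 1 [← Equiv.sum_comp (Equiv.addRight x₀)
        (fun x => (-1:ℤ)^((Algebra.trace (ZMod 2) F (b*x)).val))]
      rw [← Finset.sum_neg_distrib]
      refine Finset.sum_congr rfl fun x _ => ?_
      have htr : Algebra.trace (ZMod 2) F (b * ((Equiv.addRight x₀) x))
          = Algebra.trace (ZMod 2) F (b*x) + 1 := by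
        have : b * ((Equiv.addRight x₀) x) = b * x + b * x₀ := by
          simp [Equiv.coe_addRight, mul_add]
        rw [this, map_add, hx₀']
      simp only [htr, neg_one_pow_succ']
    have h0 : ∑ x : F, (-1:ℤ)^((Algebra.trace (ZMod 2) F (b*x)).val) = 0 := by linarith
    rw [h0]
    exact dvd_zero 8

lemma walsh2_dvd (m s : ℕ) (hms : 6 ≤ m+s) (hpar : Even (m+s)) (f : F → ZMod 2)
    (hpl : IsPlateaued2 m s F f) (b : F) : (8:ℤ) ∣ walsh2 F f b := by
  rcases hpl b with h | h
  · rw [pow_eq_zero_iff (by norm_num)] at h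
    rw [h]
    exact dvd_zero 8
  · obtain ⟨t, ht⟩ := hpar
    have ht3 : 3 ≤ t := by omega
    have hprod : (walsh2 F f b - 2^t) * (walsh2 F f b + 2^t) = 0 := by
      have h2 : (2:ℤ)^(m+s) = 2^t * 2^t := by rw [ht, pow_add]
      have := h
      rw [h2] at this
      nlinarith [this]
    have h8t : (8:ℤ) ∣ 2^t := by
      have : (2:ℤ)^3 ∣ 2^t := pow_dvd_pow 2 ht3
      norm_num at this
      exact this
    rcases mul_eq_zero.mp hprod with h' | h'
    · have : walsh2 F f b = 2^t := by linarith
      rw [this]; exact h8t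
    · have : walsh2 F f b = -(2^t) := by linarith
      rw [this]; exact dvd_neg.mpr h8t

lemma codeCbar_add (f : F → ZMod 2) :
    ∀ u ∈ codeCbar 2 F f, ∀ v ∈ codeCbar 2 F f, u + v ∈ codeCbar 2 F f := by
  rintro _ ⟨a₁, c₁, b₁, rfl⟩ _ ⟨a₂, c₂, b₂, rfl⟩
  refine ⟨a₁+a₂, c₁+c₂, b₁+b₂, ?_⟩
  funext x
  simp only [Pi.add_apply, add_mul, map_add]
  ring

lemma S_dvd (h8 : (8:ℤ) ∣ (Fintype.card F : ℤ)) (f : F → ZMod 2)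
    (hW : ∀ b : F, (8:ℤ) ∣ walsh2 F f b) :
    ∀ g ∈ codeCbar 2 F f, (8:ℤ) ∣ ∑ x : F, (-1:ℤ)^((g x).val) := by
  rintro _ ⟨a, c, b, rfl⟩
  have step : ∑ x : F, (-1:ℤ)^(((a * f x + Algebra.trace (ZMod 2) F (b*x)) + c).val)
      = (∑ x : F, (-1:ℤ)^((a * f x + Algebra.trace (ZMod 2) F (b*x)).val)) * (-1)^c.val := by
    rw [Finset.sum_mul]
    exact Finset.sum_congr rfl fun x _ => neg_one_pow_add' _ _
  rw [show (fun x => a * f x + Algebra.trace (ZMod 2) F (b*x) + c) = fun x =>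
    (a * f x + Algebra.trace (ZMod 2) F (b*x)) + c from rfl]
  rw [step]
  refine Dvd.dvd.mul_right ?_ _
  rcases zmod2_cases a with rfl | rfl
  · simp only [zero_mul, zero_add]
    exact sum_neg_one_trace h8 b
  · simp only [one_mul]
    exact hW b

lemma pair_orth (h8 : (8:ℤ) ∣ (Fintype.card F : ℤ)) (f : F → ZMod 2)
    (hW : ∀ b : F, (8:ℤ) ∣ walsh2 F f b) :
    ∀ u ∈ codeCbar 2 F f, ∀ v ∈ codeCbar 2 F f, ∑ x : F, u x * v x = 0 := by
  intro u hu v hv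
  have huv := codeCbar_add f u hu v hv
  have hSu := S_dvd h8 f hW u hu
  have hSv := S_dvd h8 f hW v hv
  have hSuv := S_dvd h8 f hW (u+v) huv
  have four : (4:ℤ) * (∑ x : F, ((u x).val : ℤ) * ((v x).val : ℤ))
      = (Fintype.card F : ℤ) - (∑ x : F, (-1:ℤ)^((u x).val))
        - (∑ x : F, (-1:ℤ)^((v x).val)) + (∑ x : F, (-1:ℤ)^(((u+v) x).val)) := by
    rw [Finset.mul_sum, show (Fintype.card F : ℤ) = ∑ _x : F, (1:ℤ) by
      simp [Finset.card_univ], ← Finset.sum_sub_distrib, ← Finset.sum_sub_distrib,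
      ← Finset.sum_add_distrib]
    exact Finset.sum_congr rfl fun x _ => by rw [four_mul_val]; rfl
  have h84 : (8:ℤ) ∣ 4 * (∑ x : F, ((u x).val : ℤ) * ((v x).val : ℤ)) := by
    rw [four]
    exact dvd_add (dvd_sub (dvd_sub h8 hSu) hSv) hSuv
  obtain ⟨k, hk⟩ := h84
  have h2 : (∑ x : F, ((u x).val : ℤ) * ((v x).val : ℤ)) = 2 * k := by omega
  have hcast : ((∑ x : F, ((u x).val : ℤ) * ((v x).val : ℤ) : ℤ) : ZMod 2)
      = ∑ x : F, u x * v x := by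
    push_cast
    refine Finset.sum_congr rfl fun x _ => ?_
    rw [ZMod.natCast_val, ZMod.natCast_val, ZMod.cast_id, ZMod.cast_id]
  rw [← hcast, h2, Int.cast_mul]
  simp only [Int.cast_ofNat, mul_eq_zero]
  exact Or.inl (by decide)

end Aux2

theorem statement19 (m s : ℕ) (hs : s ≤ m - 2) (hpar : Even (m + s)) (hms : 6 ≤ m + s)
    (F : Type) [Field F] [Fintype F] [Algebra (ZMod 2) F]
    (hcard : Fintype.card F = 2 ^ m)
    (f : F → ZMod 2) (hf0 : f 0 = 0) (hpl : IsPlateaued2 m s F f) :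
    ∃ D : Submodule (ZMod 2) (F → ZMod 2),
      (D : Set (F → ZMod 2)) ⊆ (dualCode (codeCbar 2 F f) : Set (F → ZMod 2)) ∧
      D = dualCode (D : Set (F → ZMod 2)) ∧
      Module.finrank (ZMod 2) D = 2 ^ (m - 1) := by
  classical
  have hm4 : 4 ≤ m := by omega
  have h8 : (8:ℤ) ∣ (Fintype.card F : ℤ) := by
    rw [hcard]
    push_cast
    rw [show (8:ℤ) = 2^3 by norm_num]
    exact pow_dvd_pow 2 (by omega)
  have hW : ∀ b : F, (8:ℤ) ∣ walsh2 F f b := walsh2_dvd m s hms hpar f hpl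
  have hpair := pair_orth h8 f hW
  have hCiso : Submodule.span (ZMod 2) (codeCbar 2 F f)
      ≤ (dotB F (ZMod 2)).orthogonal (Submodule.span (ZMod 2) (codeCbar 2 F f)) := by
    rw [Submodule.span_le]
    intro u hu
    rw [SetLike.mem_coe, LinearMap.BilinForm.mem_orthogonal_iff]
    have hker : Submodule.span (ZMod 2) (codeCbar 2 F f)
        ≤ LinearMap.ker ((dotB F (ZMod 2)).flip u) := by
      rw [Submodule.span_le]
      intro n hn
      exact LinearMap.mem_ker.mpr (hpair n hn u hu)
    intro n hn
    exact LinearMap.mem_ker.mp (hker hn)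
  have hrkV : Module.finrank (ZMod 2) (F → ZMod 2) = 2^m := by
    rw [Module.finrank_pi, hcard]
  have heven : Even (Module.finrank (ZMod 2) (F → ZMod 2)) := by
    rw [hrkV]
    refine ⟨2^(m-1), ?_⟩
    rw [← two_mul, ← pow_succ']
    congr 1
    omega
  obtain ⟨E, hE1, hE2, hE3⟩ := selfdual_extend (dotB F (ZMod 2))
    (fun u v => dotB_comm u v) dotB_nondeg heven (2^m) _ hCiso
    (le_trans (Nat.sub_le _ _) (le_of_eq hrkV))
  have mem_dualCode : ∀ (S : Set (F → ZMod 2)) (u : F → ZMod 2),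
      u ∈ dualCode S ↔ ∀ v ∈ S, ∑ i, u i * v i = 0 := fun S u => Iff.rfl
  have hdual : dualCode (E : Set (F → ZMod 2)) = (dotB F (ZMod 2)).orthogonal E := by
    ext u
    rw [mem_dualCode, LinearMap.BilinForm.mem_orthogonal_iff]
    constructor
    · intro h n hn
      have h0 := h n hn
      show dotB F (ZMod 2) n u = 0
      rw [dotB_comm]
      exact h0
    · intro h v hv
      have h0 : dotB F (ZMod 2) v u = 0 := h v hv
      show (∑ i, u i * v i) = 0
      rw [← dotB_apply, dotB_comm]
      exact h0
  refine ⟨E, ?_, ?_, ?_⟩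
  · intro u hu
    show u ∈ dualCode (codeCbar 2 F f)
    rw [mem_dualCode]
    intro v hv
    have hvE : v ∈ E := hE1 (Submodule.subset_span hv)
    have huE : u ∈ E := hu
    have huO : u ∈ (dotB F (ZMod 2)).orthogonal E := hE2 ▸ huE
    have h0 : dotB F (ZMod 2) v u = 0 := huO v hvE
    rw [← dotB_apply, dotB_comm]
    exact h0
  · rw [hdual]
    exact hE2
  · have h2m : (2:ℕ)^m = 2 * 2^(m-1) := by
      rw [← pow_succ']
      congr 1
      omega
    rw [hrkV, h2m] at hE3
    omega
end
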